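/- If the masked model rollout is truncated to at most H_max steps of model usage (i.e., w(t;s,a) = 0 for t ≥ H_max), then the Q-value gap satisfies |Q^π(s,a) - Q̃^π_mask(s,a)| ≤ (2 r_max / (1-γ)) · ε · (1-γ^{H_max})/(1-γ); in particular the bound grows sublinearly in H_max and is uniformly bounded by 2 r_max ε/(1-γ)². -/

import Mathlib

/-- Total-variation distance between two pmfs on a finite type. -/
noncomputable def tv {X : Type*} [Fintype X] (f g : X → ℝ) : ℝ :=
  (1 / 2) * ∑ x, |f x - g x|

/-- State-action distribution at step `t` of the Markov chain induced by
dynamics `P` and policy `π`, started at the fixed state-action pair `sa0`. -/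
noncomputable def plainDist {S A : Type*} [Fintype S] [Fintype A] [DecidableEq S] [DecidableEq A]
    (P : S × A → S → ℝ) (π : S → A → ℝ) (sa0 : S × A) : ℕ → S × A → ℝ
  | 0 => fun sa => if sa = sa0 then 1 else 0
  | t + 1 => fun sa => (∑ sa', P sa' sa.1 * plainDist P π sa0 t sa') * π sa.1 sa.2

/-- Distribution at step `t` of the masked rollout process, on the augmented
space `(S × A) × Bool` where the flag records whether `t < H` (the rollout is
still model-based, i.e. all masks so far were `1`).  Transitions use the model
`Pm` while the flag is `true` and the true dynamics `P` afterwards; the new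
flag is the old flag conjoined with the mask of the new state-action pair. -/
noncomputable def maskedDist {S A : Type*} [Fintype S] [Fintype A] [DecidableEq S] [DecidableEq A]
    (P Pm : S × A → S → ℝ) (π : S → A → ℝ) (M : S × A → Bool) (sa0 : S × A) :
    ℕ → (S × A) × Bool → ℝ
  | 0 => fun x => if x.1 = sa0 ∧ x.2 = M sa0 then 1 else 0
  | t + 1 => fun x =>
      ∑ y : (S × A) × Bool,
        maskedDist P Pm π M sa0 t y *
        (if y.2 then Pm y.1 x.1.1 else P y.1 x.1.1) * π x.1.1 x.1.2 *
        (if x.2 = (y.2 && M x.1) then 1 else 0)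

/-- `w(t; s, a)`: the probability that step `t` of the masked rollout is still
model-based (`t < H`). -/
noncomputable def wProb {S A : Type*} [Fintype S] [Fintype A] [DecidableEq S] [DecidableEq A]
    (P Pm : S × A → S → ℝ) (π : S → A → ℝ) (M : S × A → Bool) (sa0 : S × A)
    (t : ℕ) : ℝ :=
  ∑ sa : S × A, maskedDist P Pm π M sa0 t (sa, true)


section Aux
variable {S A : Type*} [Fintype S] [Fintype A] [DecidableEq S] [DecidableEq A]
variable (P Pm : S × A → S → ℝ) (π : S → A → ℝ) (M : S × A → Bool) (sa0 : S × A)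

/-- marginal of the masked distribution on `S × A`. -/
noncomputable def mMarg (t : ℕ) (sa : S × A) : ℝ :=
  maskedDist P Pm π M sa0 t (sa, true) + maskedDist P Pm π M sa0 t (sa, false)

lemma plain_nonneg (hP0 : ∀ sa s', 0 ≤ P sa s') (hπ0 : ∀ s a, 0 ≤ π s a) :
    ∀ t sa, 0 ≤ plainDist P π sa0 t sa
  | 0, sa => by simp only [plainDist]; split <;> norm_num
  | t + 1, sa => by
      simp only [plainDist]
      exact mul_nonneg (Finset.sum_nonneg fun sa' _ =>
        mul_nonneg (hP0 _ _) (plain_nonneg hP0 hπ0 t sa')) (hπ0 _ _)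

lemma plain_sum (hP1 : ∀ sa, ∑ s', P sa s' = 1) (hπ1 : ∀ s, ∑ a, π s a = 1) :
    ∀ t, ∑ sa, plainDist P π sa0 t sa = 1
  | 0 => by simp [plainDist]
  | t + 1 => by
      simp only [plainDist]
      rw [Fintype.sum_prod_type]
      have : ∀ s : S, ∑ a : A, (∑ sa', P sa' s * plainDist P π sa0 t sa') * π s a
          = ∑ sa', P sa' s * plainDist P π sa0 t sa' := by
        intro s
        rw [← Finset.mul_sum, hπ1 s, mul_one]
      rw [Finset.sum_congr rfl fun s _ => this s, Finset.sum_comm]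
      have : ∀ sa' : S × A, ∑ s : S, P sa' s * plainDist P π sa0 t sa'
          = plainDist P π sa0 t sa' := by
        intro sa'
        rw [← Finset.sum_mul, hP1 sa', one_mul]
      rw [Finset.sum_congr rfl fun sa' _ => this sa']
      exact plain_sum hP1 hπ1 t

lemma masked_nonneg (hP0 : ∀ sa s', 0 ≤ P sa s') (hPm0 : ∀ sa s', 0 ≤ Pm sa s')
    (hπ0 : ∀ s a, 0 ≤ π s a) :
    ∀ t x, 0 ≤ maskedDist P Pm π M sa0 t x
  | 0, x => by simp only [maskedDist]; split <;> norm_num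
  | t + 1, x => by
      simp only [maskedDist]
      refine Finset.sum_nonneg fun y _ => ?_
      have h1 : 0 ≤ (if y.2 then Pm y.1 x.1.1 else P y.1 x.1.1) := by
        split <;> [exact hPm0 _ _; exact hP0 _ _]
      have h2 : (0:ℝ) ≤ (if x.2 = (y.2 && M x.1) then 1 else 0) := by split <;> norm_num
      exact mul_nonneg (mul_nonneg (mul_nonneg
        (masked_nonneg hP0 hPm0 hπ0 t y) h1) (hπ0 _ _)) h2

lemma masked_true_zero (t : ℕ) (sa : S × A) (h : M sa = false) :
    maskedDist P Pm π M sa0 t (sa, true) = 0 := by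
  cases t with
  | zero =>
      simp only [maskedDist]
      split
      · next hc =>
          exfalso
          obtain ⟨h1, h2⟩ := hc
          rw [← h1, h] at h2
          simp at h2
      · rfl
  | succ t =>
      simp only [maskedDist]
      refine Finset.sum_eq_zero fun y _ => ?_
      simp [h]


lemma masked_sum (hP1 : ∀ sa, ∑ s', P sa s' = 1) (hPm1 : ∀ sa, ∑ s', Pm sa s' = 1)
    (hπ1 : ∀ s, ∑ a, π s a = 1) :
    ∀ t, ∑ x : (S × A) × Bool, maskedDist P Pm π M sa0 t x = 1
  | 0 => by
      simp only [maskedDist]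
      rw [Fintype.sum_prod_type]
      rw [Finset.sum_eq_single sa0]
      · simp
      · intro b _ hb
        refine Finset.sum_eq_zero fun c _ => ?_
        simp [hb]
      · intro h; exact absurd (Finset.mem_univ sa0) h
  | t + 1 => by
      simp only [maskedDist]
      rw [Finset.sum_comm]
      have key : ∀ y : (S × A) × Bool,
          ∑ x : (S × A) × Bool,
            maskedDist P Pm π M sa0 t y *
            (if y.2 then Pm y.1 x.1.1 else P y.1 x.1.1) * π x.1.1 x.1.2 *
            (if x.2 = (y.2 && M x.1) then 1 else 0)
          = maskedDist P Pm π M sa0 t y := by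
        intro y
        rw [Fintype.sum_prod_type]
        have inner : ∀ sa : S × A,
            ∑ b : Bool, maskedDist P Pm π M sa0 t y *
              (if y.2 then Pm y.1 sa.1 else P y.1 sa.1) * π sa.1 sa.2 *
              (if b = (y.2 && M sa) then 1 else 0)
            = maskedDist P Pm π M sa0 t y *
              (if y.2 then Pm y.1 sa.1 else P y.1 sa.1) * π sa.1 sa.2 := by
          intro sa
          rw [← Finset.mul_sum]
          have hb : ∑ b : Bool, (if b = (y.2 && M sa) then (1:ℝ) else 0) = 1 := by
            cases (y.2 && M sa) <;> simp
          rw [hb, mul_one]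
        rw [Finset.sum_congr rfl fun sa _ => inner sa]
        rw [Fintype.sum_prod_type]
        have innerA : ∀ s : S,
            ∑ a : A, maskedDist P Pm π M sa0 t y *
              (if y.2 then Pm y.1 s else P y.1 s) * π s a
            = maskedDist P Pm π M sa0 t y *
              (if y.2 then Pm y.1 s else P y.1 s) := by
          intro s
          rw [← Finset.mul_sum, hπ1 s, mul_one]
        rw [Finset.sum_congr rfl fun s _ => innerA s, ← Finset.mul_sum]
        cases hy : y.2 <;> simp only [hy, if_true, if_false, Bool.false_eq_true]
        · rw [hP1 y.1, mul_one]
        · rw [hPm1 y.1, mul_one]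
      rw [Finset.sum_congr rfl fun y _ => key y]
      exact masked_sum hP1 hPm1 hπ1 t

lemma mMarg_succ (t : ℕ) (sa : S × A) :
    mMarg P Pm π M sa0 (t + 1) sa
      = (∑ y : (S × A) × Bool, maskedDist P Pm π M sa0 t y *
          (if y.2 then Pm y.1 sa.1 else P y.1 sa.1)) * π sa.1 sa.2 := by
  simp only [mMarg, maskedDist]
  rw [← Finset.sum_add_distrib, Finset.sum_mul]
  refine Finset.sum_congr rfl fun y _ => ?_
  cases hc : (y.2 && M sa) <;> simp [hc]

lemma diff_succ (t : ℕ) (sa : S × A) :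
    plainDist P π sa0 (t + 1) sa - mMarg P Pm π M sa0 (t + 1) sa
      = ((∑ sa' : S × A, P sa' sa.1 * (plainDist P π sa0 t sa' - mMarg P Pm π M sa0 t sa'))
          + ∑ sa' : S × A, (P sa' sa.1 - Pm sa' sa.1) * maskedDist P Pm π M sa0 t (sa', true))
        * π sa.1 sa.2 := by
  rw [mMarg_succ]
  show (∑ sa', P sa' sa.1 * plainDist P π sa0 t sa') * π sa.1 sa.2 - _ = _
  rw [← sub_mul]
  congr 1
  have hy : ∑ y : (S × A) × Bool, maskedDist P Pm π M sa0 t y *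
        (if y.2 then Pm y.1 sa.1 else P y.1 sa.1)
      = ∑ sa' : S × A, ∑ b : Bool, maskedDist P Pm π M sa0 t (sa', b) *
        (if b then Pm sa' sa.1 else P sa' sa.1) := Fintype.sum_prod_type _
  rw [hy]
  have : ∀ sa' : S × A,
      ∑ b : Bool, maskedDist P Pm π M sa0 t (sa', b) *
        (if b then Pm sa' sa.1 else P sa' sa.1)
      = maskedDist P Pm π M sa0 t (sa', true) * Pm sa' sa.1
        + maskedDist P Pm π M sa0 t (sa', false) * P sa' sa.1 := by
    intro sa'
    rw [Fintype.sum_bool]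
    simp
  rw [Finset.sum_congr rfl fun sa' _ => this sa']
  rw [← Finset.sum_sub_distrib, ← Finset.sum_add_distrib]
  refine Finset.sum_congr rfl fun sa' _ => ?_
  simp only [mMarg]
  ring

lemma tv_rec (hP0 : ∀ sa s', 0 ≤ P sa s') (hPm0 : ∀ sa s', 0 ≤ Pm sa s')
    (hP1 : ∀ sa, ∑ s', P sa s' = 1)
    (hπ0 : ∀ s a, 0 ≤ π s a) (hπ1 : ∀ s, ∑ a, π s a = 1)
    (ε : ℝ) (hε : ∀ sa, M sa = true → tv (P sa) (Pm sa) ≤ ε) :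
    ∀ t, ∑ sa, |plainDist P π sa0 t sa - mMarg P Pm π M sa0 t sa|
      ≤ 2 * ε * ∑ k ∈ Finset.range t, wProb P Pm π M sa0 k
  | 0 => by
      have h0 : ∀ sa : S × A, plainDist P π sa0 0 sa - mMarg P Pm π M sa0 0 sa = 0 := by
        intro sa
        simp only [plainDist, mMarg, maskedDist]
        cases hM : M sa0 <;> by_cases h : sa = sa0 <;> simp [hM, h]
      simp [h0]
  | t + 1 => by
      set Δ : S × A → ℝ := fun sa => plainDist P π sa0 t sa - mMarg P Pm π M sa0 t sa with hΔ
      have step1 : ∑ sa : S × A, |plainDist P π sa0 (t+1) sa - mMarg P Pm π M sa0 (t+1) sa|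
          = ∑ s : S, |(∑ sa' : S × A, P sa' s * Δ sa')
              + ∑ sa' : S × A, (P sa' s - Pm sa' s) * maskedDist P Pm π M sa0 t (sa', true)| := by
        have : ∀ sa : S × A, |plainDist P π sa0 (t+1) sa - mMarg P Pm π M sa0 (t+1) sa|
            = |(∑ sa' : S × A, P sa' sa.1 * Δ sa')
                + ∑ sa' : S × A, (P sa' sa.1 - Pm sa' sa.1) * maskedDist P Pm π M sa0 t (sa', true)|
              * π sa.1 sa.2 := by
          intro sa
          rw [diff_succ, abs_mul, abs_of_nonneg (hπ0 _ _)]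
        rw [Finset.sum_congr rfl fun sa _ => this sa, Fintype.sum_prod_type]
        refine Finset.sum_congr rfl fun s _ => ?_
        dsimp only
        rw [← Finset.mul_sum, hπ1 s, mul_one]
      rw [step1]
      have step2 : ∀ s : S,
          |(∑ sa' : S × A, P sa' s * Δ sa')
            + ∑ sa' : S × A, (P sa' s - Pm sa' s) * maskedDist P Pm π M sa0 t (sa', true)|
          ≤ (∑ sa' : S × A, P sa' s * |Δ sa'|)
            + ∑ sa' : S × A, |P sa' s - Pm sa' s| * maskedDist P Pm π M sa0 t (sa', true) := by
        intro s
        refine (abs_add_le _ _).trans (add_le_add ?_ ?_)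
        · refine (Finset.abs_sum_le_sum_abs _ _).trans (le_of_eq ?_)
          refine Finset.sum_congr rfl fun sa' _ => ?_
          rw [abs_mul, abs_of_nonneg (hP0 _ _)]
        · refine (Finset.abs_sum_le_sum_abs _ _).trans (le_of_eq ?_)
          refine Finset.sum_congr rfl fun sa' _ => ?_
          rw [abs_mul, abs_of_nonneg (masked_nonneg P Pm π M sa0 hP0 hPm0 hπ0 t _)]
      calc ∑ s : S, |(∑ sa' : S × A, P sa' s * Δ sa')
              + ∑ sa' : S × A, (P sa' s - Pm sa' s) * maskedDist P Pm π M sa0 t (sa', true)|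
          ≤ ∑ s : S, ((∑ sa' : S × A, P sa' s * |Δ sa'|)
              + ∑ sa' : S × A, |P sa' s - Pm sa' s| * maskedDist P Pm π M sa0 t (sa', true)) :=
            Finset.sum_le_sum fun s _ => step2 s
        _ = (∑ sa' : S × A, |Δ sa'|)
              + ∑ sa' : S × A, (∑ s : S, |P sa' s - Pm sa' s|)
                  * maskedDist P Pm π M sa0 t (sa', true) := by
            rw [Finset.sum_add_distrib, Finset.sum_comm]
            congr 1
            · refine Finset.sum_congr rfl fun sa' _ => ?_
              rw [← Finset.sum_mul, hP1 sa', one_mul]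
            · rw [Finset.sum_comm]
              refine Finset.sum_congr rfl fun sa' _ => ?_
              rw [← Finset.sum_mul]
        _ ≤ (2 * ε * ∑ k ∈ Finset.range t, wProb P Pm π M sa0 k)
              + 2 * ε * wProb P Pm π M sa0 t := by
            refine add_le_add (tv_rec hP0 hPm0 hP1 hπ0 hπ1 ε hε t) ?_
            rw [wProb, Finset.mul_sum]
            refine Finset.sum_le_sum fun sa' _ => ?_
            cases hM : M sa' with
            | false => rw [masked_true_zero P Pm π M sa0 t sa' hM]; simp
            | true =>
                refine mul_le_mul_of_nonneg_right ?_
                  (masked_nonneg P Pm π M sa0 hP0 hPm0 hπ0 t _)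
                have := hε sa' hM
                rw [tv] at this
                linarith
        _ = 2 * ε * ∑ k ∈ Finset.range (t+1), wProb P Pm π M sa0 k := by
            rw [Finset.sum_range_succ, mul_add]

end Aux
lemma geom_indicator_summable (γ : ℝ) (h0 : 0 < γ) (h1 : γ < 1) (k : ℕ) :
    Summable (fun t : ℕ => if k < t then γ ^ t else 0) := by
  refine Summable.of_nonneg_of_le (fun t => ?_) (fun t => ?_)
    (summable_geometric_of_lt_one h0.le h1)
  · split <;> positivity
  · split
    · exact le_refl _
    · positivity

lemma geom_indicator_tsum (γ : ℝ) (h0 : 0 < γ) (h1 : γ < 1) (k : ℕ) :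
    ∑' t : ℕ, (if k < t then γ ^ t else 0) = γ ^ (k + 1) * (1 - γ)⁻¹ := by
  rw [← Summable.sum_add_tsum_nat_add (k + 1) (geom_indicator_summable γ h0 h1 k)]
  have h2 : ∑ i ∈ Finset.range (k + 1), (if k < i then γ ^ i else 0) = 0 := by
    refine Finset.sum_eq_zero fun i hi => ?_
    rw [Finset.mem_range] at hi
    rw [if_neg (by omega)]
  have h3 : ∑' i : ℕ, (if k < i + (k + 1) then γ ^ (i + (k + 1)) else 0)
      = γ ^ (k + 1) * (1 - γ)⁻¹ := by
    have : ∀ i : ℕ, (if k < i + (k + 1) then γ ^ (i + (k + 1)) else 0)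
        = γ ^ (k + 1) * γ ^ i := by
      intro i
      rw [if_pos (by omega), pow_add]
      ring
    rw [tsum_congr this, tsum_mul_left, tsum_geometric_of_lt_one h0.le h1]
  rw [h2, h3, zero_add]

lemma geom_min_le (γ : ℝ) (h0 : 0 < γ) (h1 : γ < 1) (Hmax : ℕ) :
    ∑' t : ℕ, γ ^ t * ((min t Hmax : ℕ) : ℝ) ≤ (1 - γ ^ Hmax) / (1 - γ) ^ 2 := by
  have hmin : ∀ t : ℕ, γ ^ t * ((min t Hmax : ℕ) : ℝ)
      = ∑ k ∈ Finset.range Hmax, (if k < t then γ ^ t else 0) := by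
    intro t
    have hcard : ((min t Hmax : ℕ) : ℝ)
        = ∑ k ∈ Finset.range Hmax, (if k < t then (1 : ℝ) else 0) := by
      rw [Finset.sum_boole]
      have : (Finset.range Hmax).filter (fun k => k < t) = Finset.range (min t Hmax) := by
        ext k
        simp only [Finset.mem_filter, Finset.mem_range, Nat.lt_min]
        omega
      rw [this, Finset.card_range]
    rw [hcard, Finset.mul_sum]
    refine Finset.sum_congr rfl fun k _ => ?_
    split <;> ring
  rw [tsum_congr hmin,
    Summable.tsum_finsetSum (fun k _ => geom_indicator_summable γ h0 h1 k)]
  have hterm : ∀ k ∈ Finset.range Hmax,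
      ∑' t : ℕ, (if k < t then γ ^ t else 0) ≤ γ ^ k * (1 - γ)⁻¹ := by
    intro k _
    rw [geom_indicator_tsum γ h0 h1 k]
    have : γ ^ (k + 1) ≤ γ ^ k := by
      rw [pow_succ]
      nlinarith [pow_nonneg h0.le k]
    exact mul_le_mul_of_nonneg_right this (inv_nonneg.mpr (by linarith))
  refine (Finset.sum_le_sum hterm).trans (le_of_eq ?_)
  rw [← Finset.sum_mul, geom_sum_eq (by linarith : γ ≠ 1)]
  have hne : (1 : ℝ) - γ ≠ 0 := by linarith
  have hne' : γ - 1 ≠ 0 := by linarith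
  field_simp
  ring

/-- If the masked rollout uses the model for at most `H_max` steps
(`w(t;s,a) = 0` for `t ≥ H_max`, and `w ≤ 1`), then the Q-value gap is at most
`(2 r_max/(1-γ)) ε (1-γ^{H_max})/(1-γ)`, and in particular is uniformly bounded
by `2 r_max ε/(1-γ)²`. -/
theorem stmt_11 {S A : Type*} [Fintype S] [Fintype A] [DecidableEq S] [DecidableEq A]
    (P Pm : S × A → S → ℝ) (π : S → A → ℝ) (M : S × A → Bool)
    (hP0 : ∀ sa s', 0 ≤ P sa s') (hPm0 : ∀ sa s', 0 ≤ Pm sa s')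
    (hP1 : ∀ sa, ∑ s', P sa s' = 1) (hPm1 : ∀ sa, ∑ s', Pm sa s' = 1)
    (hπ0 : ∀ s a, 0 ≤ π s a) (hπ1 : ∀ s, ∑ a, π s a = 1)
    (r : S × A → ℝ) (rmax : ℝ) (hr : ∀ sa, |r sa| ≤ rmax)
    (γ : ℝ) (hγ : γ ∈ Set.Ioo (0 : ℝ) 1)
    (ε : ℝ) (hε0 : 0 ≤ ε)
    (hε : ∀ sa, M sa = true → tv (P sa) (Pm sa) ≤ ε)
    (sa0 : S × A) (Hmax : ℕ)
    (hw1 : ∀ t, wProb P Pm π M sa0 t ≤ 1)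
    (hwH : ∀ t, Hmax ≤ t → wProb P Pm π M sa0 t = 0) :
    |(∑' t : ℕ, γ ^ t * ∑ sa, r sa * plainDist P π sa0 t sa)
        - (∑' t : ℕ, γ ^ t * ∑ x : (S × A) × Bool,
            r x.1 * maskedDist P Pm π M sa0 t x)|
      ≤ (2 * rmax / (1 - γ)) * ε * ((1 - γ ^ Hmax) / (1 - γ))
    ∧ (2 * rmax / (1 - γ)) * ε * ((1 - γ ^ Hmax) / (1 - γ))
        ≤ 2 * rmax * ε / (1 - γ) ^ 2 := by

  obtain ⟨hγ0, hγ1⟩ := hγ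
  have h1γ : (0:ℝ) < 1 - γ := by linarith
  have hrmax : 0 ≤ rmax := le_trans (abs_nonneg _) (hr sa0)
  -- rewrite the masked Q-value sum via the marginal
  have hQm : ∀ t, ∑ x : (S × A) × Bool, r x.1 * maskedDist P Pm π M sa0 t x
      = ∑ sa : S × A, r sa * mMarg P Pm π M sa0 t sa := by
    intro t
    rw [Fintype.sum_prod_type]
    refine Finset.sum_congr rfl fun sa _ => ?_
    rw [Fintype.sum_bool, mMarg, mul_add]
  -- cumulative weight bound
  have hW : ∀ t, ∑ k ∈ Finset.range t, wProb P Pm π M sa0 k ≤ ((min t Hmax : ℕ) : ℝ) := by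
    intro t
    have e1 : ∑ k ∈ Finset.range t, wProb P Pm π M sa0 k
        = ∑ k ∈ Finset.range t, (if k < Hmax then wProb P Pm π M sa0 k else 0) := by
      refine Finset.sum_congr rfl fun k _ => ?_
      split
      · rfl
      · exact hwH k (by omega)
    have e2 : ∑ k ∈ Finset.range t, (if k < Hmax then wProb P Pm π M sa0 k else 0)
        ≤ ∑ k ∈ Finset.range t, (if k < Hmax then (1:ℝ) else 0) := by
      refine Finset.sum_le_sum fun k _ => ?_
      split
      · exact hw1 k
      · exact le_refl _
    have e3 : ∑ k ∈ Finset.range t, (if k < Hmax then (1:ℝ) else 0) = ((min t Hmax : ℕ) : ℝ) := by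
      rw [Finset.sum_boole]
      have : (Finset.range t).filter (fun k => k < Hmax) = Finset.range (min t Hmax) := by
        ext k
        simp only [Finset.mem_filter, Finset.mem_range, Nat.lt_min]
      rw [this, Finset.card_range]
    rw [e1]
    exact e2.trans (le_of_eq e3)
  -- per-step reward-difference bound
  have hterm : ∀ t, |γ ^ t * ∑ sa, r sa * plainDist P π sa0 t sa
      - γ ^ t * ∑ sa, r sa * mMarg P Pm π M sa0 t sa|
      ≤ 2 * rmax * ε * (γ ^ t * ((min t Hmax : ℕ) : ℝ)) := by
    intro t
    rw [← mul_sub, abs_mul, abs_of_nonneg (pow_nonneg hγ0.le t), ← Finset.sum_sub_distrib]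
    have hd : ∀ sa : S × A, r sa * plainDist P π sa0 t sa - r sa * mMarg P Pm π M sa0 t sa
        = r sa * (plainDist P π sa0 t sa - mMarg P Pm π M sa0 t sa) := fun sa => by ring
    rw [Finset.sum_congr rfl fun sa _ => hd sa]
    have h1 : |∑ sa : S × A, r sa * (plainDist P π sa0 t sa - mMarg P Pm π M sa0 t sa)|
        ≤ rmax * ∑ sa : S × A, |plainDist P π sa0 t sa - mMarg P Pm π M sa0 t sa| := by
      refine (Finset.abs_sum_le_sum_abs _ _).trans ?_
      rw [Finset.mul_sum]
      refine Finset.sum_le_sum fun sa _ => ?_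
      rw [abs_mul]
      exact mul_le_mul_of_nonneg_right (hr sa) (abs_nonneg _)
    have h2 : ∑ sa : S × A, |plainDist P π sa0 t sa - mMarg P Pm π M sa0 t sa|
        ≤ 2 * ε * ((min t Hmax : ℕ) : ℝ) := by
      refine (tv_rec P Pm π M sa0 hP0 hPm0 hP1 hπ0 hπ1 ε hε t).trans ?_
      exact mul_le_mul_of_nonneg_left (hW t) (by positivity)
    calc γ ^ t * |∑ sa : S × A, r sa * (plainDist P π sa0 t sa - mMarg P Pm π M sa0 t sa)|
        ≤ γ ^ t * (rmax * (2 * ε * ((min t Hmax : ℕ) : ℝ))) := by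
          refine mul_le_mul_of_nonneg_left (h1.trans ?_) (pow_nonneg hγ0.le t)
          exact mul_le_mul_of_nonneg_left h2 hrmax
      _ = 2 * rmax * ε * (γ ^ t * ((min t Hmax : ℕ) : ℝ)) := by ring
  -- summability facts
  have hsum_geo : Summable (fun t : ℕ => γ ^ t) := summable_geometric_of_lt_one hγ0.le hγ1
  have hsum_min : Summable (fun t : ℕ => γ ^ t * ((min t Hmax : ℕ) : ℝ)) := by
    refine Summable.of_nonneg_of_le (fun t => by positivity) (fun t => ?_)
      (hsum_geo.mul_right (Hmax : ℝ))
    refine mul_le_mul_of_nonneg_left ?_ (pow_nonneg hγ0.le t)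
    exact_mod_cast Nat.cast_le.mpr (min_le_right t Hmax)
  have hf1 : Summable (fun t : ℕ => γ ^ t * ∑ sa, r sa * plainDist P π sa0 t sa) := by
    refine Summable.of_norm_bounded (hsum_geo.mul_left rmax) fun t => ?_
    rw [Real.norm_eq_abs, abs_mul, abs_of_nonneg (pow_nonneg hγ0.le t), mul_comm]
    refine mul_le_mul_of_nonneg_right ?_ (pow_nonneg hγ0.le t)
    calc |∑ sa : S × A, r sa * plainDist P π sa0 t sa|
        ≤ ∑ sa : S × A, rmax * plainDist P π sa0 t sa := by
          refine (Finset.abs_sum_le_sum_abs _ _).trans (Finset.sum_le_sum fun sa _ => ?_)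
          rw [abs_mul, abs_of_nonneg (plain_nonneg P π sa0 hP0 hπ0 t sa)]
          exact mul_le_mul_of_nonneg_right (hr sa) (plain_nonneg P π sa0 hP0 hπ0 t sa)
      _ = rmax := by rw [← Finset.mul_sum, plain_sum P π sa0 hP1 hπ1 t, mul_one]
  have hf2 : Summable (fun t : ℕ => γ ^ t * ∑ x : (S × A) × Bool,
      r x.1 * maskedDist P Pm π M sa0 t x) := by
    refine Summable.of_norm_bounded (hsum_geo.mul_left rmax) fun t => ?_
    rw [Real.norm_eq_abs, abs_mul, abs_of_nonneg (pow_nonneg hγ0.le t), mul_comm]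
    refine mul_le_mul_of_nonneg_right ?_ (pow_nonneg hγ0.le t)
    calc |∑ x : (S × A) × Bool, r x.1 * maskedDist P Pm π M sa0 t x|
        ≤ ∑ x : (S × A) × Bool, rmax * maskedDist P Pm π M sa0 t x := by
          refine (Finset.abs_sum_le_sum_abs _ _).trans (Finset.sum_le_sum fun x _ => ?_)
          rw [abs_mul, abs_of_nonneg (masked_nonneg P Pm π M sa0 hP0 hPm0 hπ0 t x)]
          exact mul_le_mul_of_nonneg_right (hr x.1) (masked_nonneg P Pm π M sa0 hP0 hPm0 hπ0 t x)
      _ = rmax := by rw [← Finset.mul_sum, masked_sum P Pm π M sa0 hP1 hPm1 hπ1 t, mul_one]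
  have hsum_g : Summable (fun t : ℕ => 2 * rmax * ε * (γ ^ t * ((min t Hmax : ℕ) : ℝ))) :=
    hsum_min.mul_left _
  -- main bound
  have hmain : |(∑' t : ℕ, γ ^ t * ∑ sa, r sa * plainDist P π sa0 t sa)
      - (∑' t : ℕ, γ ^ t * ∑ x : (S × A) × Bool, r x.1 * maskedDist P Pm π M sa0 t x)|
      ≤ (2 * rmax / (1 - γ)) * ε * ((1 - γ ^ Hmax) / (1 - γ)) := by
    rw [← Summable.tsum_sub hf1 hf2]
    have habs : |∑' t : ℕ, (γ ^ t * ∑ sa, r sa * plainDist P π sa0 t sa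
        - γ ^ t * ∑ x : (S × A) × Bool, r x.1 * maskedDist P Pm π M sa0 t x)|
        ≤ ∑' t : ℕ, 2 * rmax * ε * (γ ^ t * ((min t Hmax : ℕ) : ℝ)) := by
      rw [← Real.norm_eq_abs]
      refine tsum_of_norm_bounded hsum_g.hasSum fun t => ?_
      rw [Real.norm_eq_abs, hQm t]
      exact hterm t
    refine habs.trans ?_
    rw [tsum_mul_left]
    calc 2 * rmax * ε * ∑' t : ℕ, γ ^ t * ((min t Hmax : ℕ) : ℝ)
        ≤ 2 * rmax * ε * ((1 - γ ^ Hmax) / (1 - γ) ^ 2) :=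
          mul_le_mul_of_nonneg_left (geom_min_le γ hγ0 hγ1 Hmax) (by positivity)
      _ = (2 * rmax / (1 - γ)) * ε * ((1 - γ ^ Hmax) / (1 - γ)) := by
          have hne : (1:ℝ) - γ ≠ 0 := ne_of_gt h1γ
          field_simp
  refine ⟨hmain, ?_⟩
  -- second conjunct
  have e1 : (2 * rmax / (1 - γ)) * ε * ((1 - γ ^ Hmax) / (1 - γ))
      = 2 * rmax * ε * (1 - γ ^ Hmax) / (1 - γ) ^ 2 := by
    have hne : (1:ℝ) - γ ≠ 0 := ne_of_gt h1γ
    field_simp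
  have e2 : 2 * rmax * ε * (1 - γ ^ Hmax) ≤ 2 * rmax * ε := by
    have h3 : 0 ≤ 2 * rmax * ε := by positivity
    nlinarith [pow_nonneg hγ0.le Hmax]
  rw [e1]
  exact div_le_div_of_nonneg_right e2 (by positivity) |>.trans_eq rfl
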